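/- Let M be a matroid of finite rank m and let S be a finite sequence (multiset, repetitions allowed) of elements of the ground set of M with |S| > m(r-1), where r ≥ 1. Then S can be partitioned into r pairwise disjoint subsequences S_1, …, S_r such that cl(∅) ⊊ cl(S_1) ⊆ cl(S_2) ⊆ … ⊆ cl(S_r). -/

import Mathlib

open Set

theorem matroidal_tverberg_aux {α ι : Type*} [Fintype ι] [DecidableEq ι]
    (M : Matroid α) (m : ℕ)
    (B : Set α) (hB : M.IsBase B) (hBfin : B.Finite) (hBm : B.ncard = m)
    (S : ι → α) (hS : ∀ i, S i ∈ M.E) (hS' : ∀ i, S i ∉ M.closure ∅) :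
    ∀ (r : ℕ) (K : Finset ι), m * r < K.card →
    ∃ J : Fin (r + 1) → Finset ι,
      (∀ k, J k ⊆ K) ∧
      (∀ i j, i ≠ j → Disjoint (J i) (J j)) ∧
      M.closure ∅ ⊂ M.closure (S '' ((J 0 : Finset ι) : Set ι)) ∧
      (∀ i j, i ≤ j →
        M.closure (S '' ((J i : Finset ι) : Set ι)) ⊆
          M.closure (S '' ((J j : Finset ι) : Set ι))) := by
  intro r
  induction r with
  | zero =>
    intro K hK
    have hKne : K.Nonempty := Finset.card_pos.mp (by omega)
    obtain ⟨i, hi⟩ := hKne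
    refine ⟨fun _ => {i}, fun _ => by simpa using hi, ?_, ?_, ?_⟩
    · intro a b hab
      exact absurd (Fin.ext (by omega)) hab
    · have h1 : M.closure ∅ ⊆ M.closure (S '' ({i} : Finset ι)) :=
        M.closure_mono (empty_subset _)
      have h2 : S i ∈ M.closure (S '' ({i} : Finset ι)) := by
        apply M.subset_closure _ (by rintro x ⟨y, _, rfl⟩; exact hS y)
        exact ⟨i, by simp⟩
      exact lt_of_le_of_ne h1 fun he => hS' i (he.symm ▸ h2)
    · intro a b _
      have : a = b := Fin.ext (by omega)
      subst this
      exact le_refl _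
  | succ r IH =>
    intro K hK
    obtain ⟨I, hI⟩ := M.exists_isBasis' (S '' (K : Set ι))
    obtain ⟨B', hB', hIB'⟩ := hI.indep.exists_isBase_superset
    have hB'fin : B'.Finite := hB.finite_of_finite hBfin hB'
    have hIfin : I.Finite := hB'fin.subset hIB'
    have hIcard : I.ncard ≤ m := by
      calc I.ncard ≤ B'.ncard := Set.ncard_le_ncard hIB' hB'fin
        _ = B.ncard := hB'.ncard_eq_ncard_of_isBase hB
        _ = m := hBm
    -- choose indices for a basis
    have hchoice : ∀ x ∈ hIfin.toFinset, ∃ i, i ∈ K ∧ S i = x := by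
      intro x hx
      have : x ∈ S '' (K : Set ι) := hI.subset (hIfin.mem_toFinset.mp hx)
      obtain ⟨i, hiK, hix⟩ := this
      exact ⟨i, hiK, hix⟩
    choose f hfK hfS using hchoice
    set T : Finset ι := hIfin.toFinset.attach.image (fun x => f x.1 x.2) with hT
    have hTK : T ⊆ K := by
      intro i hi
      simp only [hT, Finset.mem_image] at hi
      obtain ⟨x, _, rfl⟩ := hi
      exact hfK x.1 x.2
    have hTcard : T.card ≤ m := by
      calc T.card ≤ hIfin.toFinset.attach.card := Finset.card_image_le
        _ = hIfin.toFinset.card := Finset.card_attach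
        _ = I.ncard := (Set.ncard_eq_toFinset_card I hIfin).symm
        _ ≤ m := hIcard
    have hST : S '' (T : Set ι) = I := by
      apply Set.eq_of_subset_of_subset
      · rintro y ⟨i, hiT, rfl⟩
        simp only [hT, Finset.coe_image, Set.mem_image] at hiT
        obtain ⟨x, _, rfl⟩ := hiT
        rw [hfS x.1 x.2]
        exact hIfin.mem_toFinset.mp x.2
      · intro x hx
        have hx' : x ∈ hIfin.toFinset := hIfin.mem_toFinset.mpr hx
        refine ⟨f x hx', ?_, hfS x hx'⟩
        simp only [hT, Finset.coe_image, Set.mem_image]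
        exact ⟨⟨x, hx'⟩, by simp, rfl⟩
    have hclT : M.closure (S '' (T : Set ι)) = M.closure (S '' (K : Set ι)) := by
      rw [hST]; exact hI.closure_eq_closure
    set K' : Finset ι := K \ T with hK'
    have hK'card : m * r < K'.card := by
      have : K'.card = K.card - T.card := Finset.card_sdiff_of_subset hTK
      have hmul : m * (r + 1) = m * r + m := by ring
      omega
    obtain ⟨J', hJ'K, hJ'disj, hJ'0, hJ'chain⟩ := IH K' hK'card
    set J : Fin (r + 2) → Finset ι :=
      fun k => if h : (k : ℕ) < r + 1 then J' ⟨k, h⟩ else T with hJ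
    have hJK : ∀ k, J k ⊆ K := by
      intro k
      simp only [hJ]
      split
      · exact (hJ'K _).trans (Finset.sdiff_subset)
      · exact hTK
    refine ⟨J, hJK, ?_, ?_, ?_⟩
    · intro a b hab
      simp only [hJ]
      split <;> split
      · refine hJ'disj _ _ ?_
        intro h
        have hv : (a : ℕ) = (b : ℕ) := Fin.mk_eq_mk.mp h
        exact hab (Fin.ext hv)
      · exact Finset.disjoint_of_subset_left (hJ'K _) Finset.sdiff_disjoint
      · exact Finset.disjoint_of_subset_right (hJ'K _) Finset.sdiff_disjoint.symm
      · exfalso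
        rename_i h1 h2
        have ha : (a : ℕ) = r + 1 := by omega
        have hb : (b : ℕ) = r + 1 := by omega
        exact hab (Fin.ext (ha.trans hb.symm))
    · have h0 : J 0 = J' 0 := by
        simp only [hJ]
        rw [dif_pos (show ((0 : Fin (r+2)) : ℕ) < r + 1 by simp)]
        congr 1
      rw [h0]
      exact hJ'0
    · intro a b hab
      by_cases hb : (b : ℕ) < r + 1
      · have ha : (a : ℕ) < r + 1 := lt_of_le_of_lt (Fin.le_def.mp hab) hb
        simp only [hJ, dif_pos ha, dif_pos hb]
        exact hJ'chain ⟨a, ha⟩ ⟨b, hb⟩ (Fin.mk_le_mk.mpr (Fin.le_def.mp hab))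
      · by_cases ha : (a : ℕ) < r + 1
        · simp only [hJ, dif_pos ha, dif_neg hb]
          rw [hclT]
          apply M.closure_mono
          apply Set.image_mono
          exact_mod_cast (hJ'K _).trans (Finset.sdiff_subset)
        · simp only [hJ, dif_neg ha, dif_neg hb]
          exact subset_rfl

/-- Matroidal Tverberg: a sequence of length `> m (r-1)` in a matroid of finite rank `m`
can be split into `r` pairwise disjoint subsequences with nested closures, the first
one having closure strictly larger than the closure of the empty set. -/
theorem matroidal_tverberg {α ι : Type*} [Fintype ι] [DecidableEq ι]
    (M : Matroid α) (m r : ℕ) (hr : 1 ≤ r)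
    (B : Set α) (hB : M.IsBase B) (hBfin : B.Finite) (hBm : B.ncard = m)
    (S : ι → α) (hS : ∀ i, S i ∈ M.E) (hS' : ∀ i, S i ∉ M.closure ∅)
    (hlen : Fintype.card ι > m * (r - 1)) :
    ∃ J : Fin r → Finset ι,
      (∀ i j, i ≠ j → Disjoint (J i) (J j)) ∧
      M.closure ∅ ⊂ M.closure (S '' (J ⟨0, hr⟩ : Set ι)) ∧
      (∀ i j : Fin r, i ≤ j →
        M.closure (S '' (J i : Set ι)) ⊆ M.closure (S '' (J j : Set ι))) := by
  obtain ⟨r', rfl⟩ : ∃ r', r = r' + 1 := ⟨r - 1, by omega⟩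
  have hcard : m * r' < (Finset.univ : Finset ι).card := by
    simpa using hlen
  obtain ⟨J, _, hJdisj, hJ0, hJchain⟩ :=
    matroidal_tverberg_aux M m B hB hBfin hBm S hS hS' r' Finset.univ hcard
  refine ⟨J, hJdisj, ?_, hJchain⟩
  rw [show (⟨0, hr⟩ : Fin (r' + 1)) = 0 from Fin.ext (by simp)]
  exact hJ0
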